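/- The 21-dimensional space of alternating 2-forms on ℝ⁷ is the internal direct sum of the two subspaces Λ²₇ := { ι_vρ₀ : v ∈ ℝ⁷ } and Λ²₁₄ := { α : the skew-adjoint endomorphism A_α of ℝ⁷ determined by ⟨A_α x, y⟩ = α(x,y) annihilates ρ₀ }; moreover Λ²₇ has dimension 7 (so v ↦ ι_vρ₀ is injective) and Λ²₁₄ has dimension 14. -/

import Mathlib

noncomputable section

/-- `eⁱ ∧ eʲ ∧ eᵏ` evaluated at `(x, y, z)` (a 3×3 determinant of coordinates). -/
def tripleForm (i j k : Fin 7) (x y z : Fin 7 → ℝ) : ℝ :=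
  x i * (y j * z k - y k * z j) - x j * (y i * z k - y k * z i)
    + x k * (y i * z j - y j * z i)

/-- The standard G₂ 3-form on ℝ⁷:
`ρ₀ = e¹∧e²∧e³ + e¹∧e⁴∧e⁵ + e¹∧e⁶∧e⁷ + e²∧e⁴∧e⁶ − e²∧e⁵∧e⁷ − e³∧e⁴∧e⁷ − e³∧e⁵∧e⁶`
(indices shifted down by one to `Fin 7`). -/
def rho (x y z : Fin 7 → ℝ) : ℝ :=
  tripleForm 0 1 2 x y z + tripleForm 0 3 4 x y z + tripleForm 0 5 6 x y z
    + tripleForm 1 3 5 x y z - tripleForm 1 4 6 x y z - tripleForm 2 3 6 x y z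
    - tripleForm 2 4 5 x y z

/-- The standard inner product on ℝ⁷. -/
def inn (x y : Fin 7 → ℝ) : ℝ := ∑ i, x i * y i

/-- The cross product on ℝ⁷ determined by `ρ₀`: the unique vector with
`⟨x ⋆ y, z⟩ = ρ₀ (x, y, z)`; its `i`-th coordinate is `ρ₀ (x, y, eᵢ)`. -/
def cross (x y : Fin 7 → ℝ) : Fin 7 → ℝ := fun i => rho x y (Pi.single i 1)

/-- The skew-adjoint endomorphism `A_α` of an alternating 2-form `α`, determined by
`⟨A_α x, y⟩ = α (x, y)`; its `i`-th coordinate at `x` is `α (x, eᵢ)`. -/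
def aOf (α : AlternatingMap ℝ (Fin 7 → ℝ) ℝ (Fin 2)) (x : Fin 7 → ℝ) : Fin 7 → ℝ :=
  fun i => α ![x, Pi.single i 1]

abbrev Alt2 := AlternatingMap ℝ (Fin 7 → ℝ) ℝ (Fin 2)

namespace Stmt12

lemma rho_add₁ (x x' y z : Fin 7 → ℝ) : rho (x + x') y z = rho x y z + rho x' y z := by
  simp only [rho, tripleForm, Pi.add_apply]; ring

lemma rho_smul₁ (c : ℝ) (x y z : Fin 7 → ℝ) : rho (c • x) y z = c * rho x y z := by
  simp only [rho, tripleForm, Pi.smul_apply, smul_eq_mul]; ring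

lemma rho_add₂ (x y y' z : Fin 7 → ℝ) : rho x (y + y') z = rho x y z + rho x y' z := by
  simp only [rho, tripleForm, Pi.add_apply]; ring

lemma rho_smul₂ (c : ℝ) (x y z : Fin 7 → ℝ) : rho x (c • y) z = c * rho x y z := by
  simp only [rho, tripleForm, Pi.smul_apply, smul_eq_mul]; ring

lemma rho_add₃ (x y z z' : Fin 7 → ℝ) : rho x y (z + z') = rho x y z + rho x y z' := by
  simp only [rho, tripleForm, Pi.add_apply]; ring

lemma rho_smul₃ (c : ℝ) (x y z : Fin 7 → ℝ) : rho x y (c • z) = c * rho x y z := by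
  simp only [rho, tripleForm, Pi.smul_apply, smul_eq_mul]; ring

lemma update_cons0 (a c y : Fin 7 → ℝ) : Function.update ![a, y] 0 c = ![c, y] := by
  ext k
  fin_cases k <;> simp

lemma update_cons1 (a y c : Fin 7 → ℝ) : Function.update ![a, y] 1 c = ![a, c] := by
  ext k
  fin_cases k <;> simp

/-- Build an alternating 2-form from a bilinear alternating function. -/
def mkAlt (f : (Fin 7 → ℝ) → (Fin 7 → ℝ) → ℝ)
    (h1a : ∀ x x' y, f (x + x') y = f x y + f x' y)
    (h1s : ∀ (c : ℝ) x y, f (c • x) y = c * f x y)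
    (h2a : ∀ x y y', f x (y + y') = f x y + f x y')
    (h2s : ∀ (c : ℝ) x y, f x (c • y) = c * f x y)
    (hd : ∀ x, f x x = 0) : Alt2 where
  toFun m := f (m 0) (m 1)
  map_update_add' := by
    intro _ m i a b
    fin_cases i <;>
      simp [Function.update_self, Function.update_of_ne, h1a, h2a]
  map_update_smul' := by
    intro _ m i c a
    fin_cases i <;>
      simp [Function.update_self, Function.update_of_ne, h1s, h2s]
  map_eq_zero_of_eq' := by
    intro m i j hm hij
    have h01 : m 0 = m 1 := by
      fin_cases i <;> fin_cases j <;> simp_all [eq_comm]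
    show f (m 0) (m 1) = 0
    rw [h01]; exact hd _

@[simp] lemma mkAlt_apply (f h1a h1s h2a h2s hd) (x y : Fin 7 → ℝ) :
    (mkAlt f h1a h1s h2a h2s hd) ![x, y] = f x y := rfl

/-- `v ↦ ι_v ρ` as a linear map into alternating 2-forms. -/
def iotaL : (Fin 7 → ℝ) →ₗ[ℝ] Alt2 where
  toFun v := mkAlt (fun x y => rho v x y) (fun a b y => rho_add₂ v a b y)
    (fun c a y => rho_smul₂ c v a y) (fun x a b => rho_add₃ v x a b)
    (fun c x a => rho_smul₃ c v x a) (fun x => by simp only [rho, tripleForm]; ring)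
  map_add' v w := by
    ext m
    show rho (v + w) (m 0) (m 1) = _
    rw [rho_add₁]
    rfl
  map_smul' c v := by
    ext m
    show rho (c • v) (m 0) (m 1) = _
    rw [rho_smul₁]
    rfl

@[simp] lemma iotaL_apply (v x y : Fin 7 → ℝ) : iotaL v ![x, y] = rho v x y := rfl

lemma eta2 (m : Fin 2 → (Fin 7 → ℝ)) : m = ![m 0, m 1] := by
  funext k; fin_cases k <;> rfl

lemma alt_add₁ (α : Alt2) (a b y : Fin 7 → ℝ) :
    α ![a + b, y] = α ![a, y] + α ![b, y] := by
  have := α.map_update_add ![a, y] 0 a b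
  rwa [update_cons0, update_cons0, update_cons0] at this

lemma alt_smul₁ (α : Alt2) (c : ℝ) (a y : Fin 7 → ℝ) :
    α ![c • a, y] = c • α ![a, y] := by
  have := α.map_update_smul ![a, y] 0 c a
  rwa [update_cons0, update_cons0] at this

lemma alt_add₂ (α : Alt2) (a b y : Fin 7 → ℝ) :
    α ![y, a + b] = α ![y, a] + α ![y, b] := by
  have := α.map_update_add ![y, a] 1 a b
  rwa [update_cons1, update_cons1, update_cons1] at this

lemma alt_smul₂ (α : Alt2) (c : ℝ) (a y : Fin 7 → ℝ) :
    α ![y, c • a] = c • α ![y, a] := by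
  have := α.map_update_smul ![y, a] 1 c a
  rwa [update_cons1, update_cons1] at this

lemma single_expand (x : Fin 7 → ℝ) : x = ∑ i, x i • (Pi.single i 1 : Fin 7 → ℝ) := by
  funext j
  simp [Finset.sum_apply, Pi.single_apply]

lemma alt_zero₁ (α : Alt2) (y : Fin 7 → ℝ) : α ![0, y] = 0 := by
  have := alt_smul₁ α 0 0 y
  simpa using this

lemma alt_zero₂ (α : Alt2) (y : Fin 7 → ℝ) : α ![y, 0] = 0 := by
  have := alt_smul₂ α 0 0 y
  simpa using this

lemma alt_sum₁ {ι : Type*} (α : Alt2) (s : Finset ι) (f : ι → (Fin 7 → ℝ)) (y : Fin 7 → ℝ) :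
    α ![∑ i ∈ s, f i, y] = ∑ i ∈ s, α ![f i, y] := by
  classical
  induction s using Finset.induction_on with
  | empty => simpa using alt_zero₁ α y
  | insert _ _ h ih => rw [Finset.sum_insert h, alt_add₁, ih, Finset.sum_insert h]

lemma alt_sum₂ {ι : Type*} (α : Alt2) (s : Finset ι) (f : ι → (Fin 7 → ℝ)) (y : Fin 7 → ℝ) :
    α ![y, ∑ i ∈ s, f i] = ∑ i ∈ s, α ![y, f i] := by
  classical
  induction s using Finset.induction_on with
  | empty => simpa using alt_zero₂ α y
  | insert _ _ h ih => rw [Finset.sum_insert h, alt_add₂, ih, Finset.sum_insert h]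

/-- Expansion of an alternating 2-form in coordinates. -/
lemma alt_expand (α : Alt2) (x y : Fin 7 → ℝ) :
    α ![x, y] = ∑ i, ∑ j, x i * y j * α ![Pi.single i 1, Pi.single j 1] := by
  conv_lhs => rw [single_expand x, alt_sum₁]
  refine Finset.sum_congr rfl fun i _ => ?_
  rw [alt_smul₁]
  conv_lhs => rw [single_expand y, alt_sum₂, Finset.smul_sum]
  refine Finset.sum_congr rfl fun j _ => ?_
  rw [alt_smul₂]
  simp [mul_assoc]

lemma alt_skew (α : Alt2) (x y : Fin 7 → ℝ) : α ![y, x] = - α ![x, y] := by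
  have h : ![x, y] ∘ Equiv.swap (0 : Fin 2) 1 = ![y, x] := by
    funext k; fin_cases k <;> simp
  have := α.map_swap (v := ![x, y]) (i := 0) (j := 1) (by decide)
  rwa [h] at this

lemma alt_diag (α : Alt2) (x : Fin 7 → ℝ) : α ![x, x] = 0 :=
  α.map_eq_zero_of_eq ![x, x] (show ![x,x] 0 = ![x,x] 1 from rfl) (by decide)

lemma aOf_apply (α : Alt2) (x : Fin 7 → ℝ) (i : Fin 7) :
    aOf α x i = ∑ p, x p * α ![Pi.single p 1, Pi.single i 1] := by
  show α ![x, Pi.single i 1] = _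
  rw [alt_expand]
  refine Finset.sum_congr rfl fun p _ => ?_
  simp [Pi.single_apply, mul_ite, ite_mul, Finset.sum_ite_eq']

/-- The contraction of a 2-form with `ρ₀`, as a linear map to `ℝ⁷`. -/
def cL : Alt2 →ₗ[ℝ] (Fin 7 → ℝ) where
  toFun α := fun k => ∑ i, ∑ j,
    rho (Pi.single k 1) (Pi.single i 1) (Pi.single j 1) * α ![Pi.single i 1, Pi.single j 1]
  map_add' α β := by
    funext k
    simp [AlternatingMap.add_apply, mul_add, Finset.sum_add_distrib]
  map_smul' c α := by
    funext k
    simp only [AlternatingMap.smul_apply, smul_eq_mul, RingHom.id_apply, Pi.smul_apply,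
      Finset.mul_sum]
    refine Finset.sum_congr rfl fun i _ => ?_
    refine Finset.sum_congr rfl fun j _ => ?_
    ring

set_option maxHeartbeats 1000000 in
lemma c_iota (v : Fin 7 → ℝ) : cL (iotaL v) = (6 : ℝ) • v := by
  funext k
  simp only [cL, LinearMap.coe_mk, AddHom.coe_mk, Pi.smul_apply, smul_eq_mul]
  fin_cases k <;>
  · simp [Fin.sum_univ_seven, rho, tripleForm, Pi.single_apply]
    ring

set_option maxHeartbeats 4000000 in
lemma core (s : Fin 7 → Fin 7 → ℝ) (x y z : Fin 7 → ℝ)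
    (h : ∀ l : Fin 7, ∑ i, ∑ j,
      rho (Pi.single l 1) (Pi.single i 1) (Pi.single j 1) * (s i j - s j i) = 0) :
    rho (fun i => ∑ p, x p * (s p i - s i p)) y z
      + rho x (fun i => ∑ p, y p * (s p i - s i p)) z
      + rho x y (fun i => ∑ p, z p * (s p i - s i p)) = 0 := by
  have h0 := h 0
  have h1 := h 1
  have h2 := h 2
  have h3 := h 3
  have h4 := h 4
  have h5 := h 5
  have h6 := h 6
  simp only [Fin.sum_univ_seven, rho, tripleForm, Pi.single_apply, Fin.reduceEq,
    if_true, if_false, ite_true, ite_false] at h0 h1 h2 h3 h4 h5 h6 ⊢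
  linear_combination ((1/2) * (- x 1 * y 3 * z 6 - x 1 * y 4 * z 5 + x 1 * y 5 * z 4 + x 1 * y 6 * z 3 - x 2 * y 3 * z 5 + x 2 * y 4 * z 6 + x 2 * y 5 * z 3 - x 2 * y 6 * z 4 + x 3 * y 1 * z 6 + x 3 * y 2 * z 5 - x 3 * y 5 * z 2 - x 3 * y 6 * z 1 + x 4 * y 1 * z 5 - x 4 * y 2 * z 6 - x 4 * y 5 * z 1 + x 4 * y 6 * z 2 - x 5 * y 1 * z 4 - x 5 * y 2 * z 3 + x 5 * y 3 * z 2 + x 5 * y 4 * z 1 - x 6 * y 1 * z 3 + x 6 * y 2 * z 4 + x 6 * y 3 * z 1 - x 6 * y 4 * z 2)) * h0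
    + ((1/2) * ( x 0 * y 3 * z 6 + x 0 * y 4 * z 5 - x 0 * y 5 * z 4 - x 0 * y 6 * z 3 + x 2 * y 3 * z 4 - x 2 * y 4 * z 3 + x 2 * y 5 * z 6 - x 2 * y 6 * z 5 - x 3 * y 0 * z 6 - x 3 * y 2 * z 4 + x 3 * y 4 * z 2 + x 3 * y 6 * z 0 - x 4 * y 0 * z 5 + x 4 * y 2 * z 3 - x 4 * y 3 * z 2 + x 4 * y 5 * z 0 + x 5 * y 0 * z 4 - x 5 * y 2 * z 6 - x 5 * y 4 * z 0 + x 5 * y 6 * z 2 + x 6 * y 0 * z 3 + x 6 * y 2 * z 5 - x 6 * y 3 * z 0 - x 6 * y 5 * z 2)) * h1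
    + ((1/2) * ( x 0 * y 3 * z 5 - x 0 * y 4 * z 6 - x 0 * y 5 * z 3 + x 0 * y 6 * z 4 - x 1 * y 3 * z 4 + x 1 * y 4 * z 3 - x 1 * y 5 * z 6 + x 1 * y 6 * z 5 - x 3 * y 0 * z 5 + x 3 * y 1 * z 4 - x 3 * y 4 * z 1 + x 3 * y 5 * z 0 + x 4 * y 0 * z 6 - x 4 * y 1 * z 3 + x 4 * y 3 * z 1 - x 4 * y 6 * z 0 + x 5 * y 0 * z 3 + x 5 * y 1 * z 6 - x 5 * y 3 * z 0 - x 5 * y 6 * z 1 - x 6 * y 0 * z 4 - x 6 * y 1 * z 5 + x 6 * y 4 * z 0 + x 6 * y 5 * z 1)) * h2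
    + ((1/2) * (- x 0 * y 1 * z 6 - x 0 * y 2 * z 5 + x 0 * y 5 * z 2 + x 0 * y 6 * z 1 + x 1 * y 0 * z 6 + x 1 * y 2 * z 4 - x 1 * y 4 * z 2 - x 1 * y 6 * z 0 + x 2 * y 0 * z 5 - x 2 * y 1 * z 4 + x 2 * y 4 * z 1 - x 2 * y 5 * z 0 + x 4 * y 1 * z 2 - x 4 * y 2 * z 1 + x 4 * y 5 * z 6 - x 4 * y 6 * z 5 - x 5 * y 0 * z 2 + x 5 * y 2 * z 0 - x 5 * y 4 * z 6 + x 5 * y 6 * z 4 - x 6 * y 0 * z 1 + x 6 * y 1 * z 0 + x 6 * y 4 * z 5 - x 6 * y 5 * z 4)) * h3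
    + ((1/2) * (- x 0 * y 1 * z 5 + x 0 * y 2 * z 6 + x 0 * y 5 * z 1 - x 0 * y 6 * z 2 + x 1 * y 0 * z 5 - x 1 * y 2 * z 3 + x 1 * y 3 * z 2 - x 1 * y 5 * z 0 - x 2 * y 0 * z 6 + x 2 * y 1 * z 3 - x 2 * y 3 * z 1 + x 2 * y 6 * z 0 - x 3 * y 1 * z 2 + x 3 * y 2 * z 1 - x 3 * y 5 * z 6 + x 3 * y 6 * z 5 - x 5 * y 0 * z 1 + x 5 * y 1 * z 0 + x 5 * y 3 * z 6 - x 5 * y 6 * z 3 + x 6 * y 0 * z 2 - x 6 * y 2 * z 0 - x 6 * y 3 * z 5 + x 6 * y 5 * z 3)) * h4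
    + ((1/2) * ( x 0 * y 1 * z 4 + x 0 * y 2 * z 3 - x 0 * y 3 * z 2 - x 0 * y 4 * z 1 - x 1 * y 0 * z 4 + x 1 * y 2 * z 6 + x 1 * y 4 * z 0 - x 1 * y 6 * z 2 - x 2 * y 0 * z 3 - x 2 * y 1 * z 6 + x 2 * y 3 * z 0 + x 2 * y 6 * z 1 + x 3 * y 0 * z 2 - x 3 * y 2 * z 0 + x 3 * y 4 * z 6 - x 3 * y 6 * z 4 + x 4 * y 0 * z 1 - x 4 * y 1 * z 0 - x 4 * y 3 * z 6 + x 4 * y 6 * z 3 + x 6 * y 1 * z 2 - x 6 * y 2 * z 1 + x 6 * y 3 * z 4 - x 6 * y 4 * z 3)) * h5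
    + ((1/2) * ( x 0 * y 1 * z 3 - x 0 * y 2 * z 4 - x 0 * y 3 * z 1 + x 0 * y 4 * z 2 - x 1 * y 0 * z 3 - x 1 * y 2 * z 5 + x 1 * y 3 * z 0 + x 1 * y 5 * z 2 + x 2 * y 0 * z 4 + x 2 * y 1 * z 5 - x 2 * y 4 * z 0 - x 2 * y 5 * z 1 + x 3 * y 0 * z 1 - x 3 * y 1 * z 0 - x 3 * y 4 * z 5 + x 3 * y 5 * z 4 - x 4 * y 0 * z 2 + x 4 * y 2 * z 0 + x 4 * y 3 * z 5 - x 4 * y 5 * z 3 - x 5 * y 1 * z 2 + x 5 * y 2 * z 1 - x 5 * y 3 * z 4 + x 5 * y 4 * z 3)) * h6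

set_option maxHeartbeats 4000000 in
lemma core2 (s : Fin 7 → Fin 7 → ℝ)
    (h : ∀ x y z : Fin 7 → ℝ,
      rho (fun i => ∑ p, x p * (s p i - s i p)) y z
        + rho x (fun i => ∑ p, y p * (s p i - s i p)) z
        + rho x y (fun i => ∑ p, z p * (s p i - s i p)) = 0) :
    ∀ l : Fin 7, ∑ i, ∑ j,
      rho (Pi.single l 1) (Pi.single i 1) (Pi.single j 1) * (s i j - s j i) = 0 := by
  intro l
  fin_cases l
  · have H := h (Pi.single 1 1) (Pi.single 3 1) (Pi.single 6 1)
    simp [Fin.sum_univ_seven, rho, tripleForm, Pi.single_apply] at H ⊢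
    linear_combination (-2 : ℝ) * H
  · have H := h (Pi.single 0 1) (Pi.single 3 1) (Pi.single 6 1)
    simp [Fin.sum_univ_seven, rho, tripleForm, Pi.single_apply] at H ⊢
    linear_combination (2 : ℝ) * H
  · have H := h (Pi.single 0 1) (Pi.single 3 1) (Pi.single 5 1)
    simp [Fin.sum_univ_seven, rho, tripleForm, Pi.single_apply] at H ⊢
    linear_combination (2 : ℝ) * H
  · have H := h (Pi.single 0 1) (Pi.single 1 1) (Pi.single 6 1)
    simp [Fin.sum_univ_seven, rho, tripleForm, Pi.single_apply] at H ⊢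
    linear_combination (-2 : ℝ) * H
  · have H := h (Pi.single 0 1) (Pi.single 1 1) (Pi.single 5 1)
    simp [Fin.sum_univ_seven, rho, tripleForm, Pi.single_apply] at H ⊢
    linear_combination (-2 : ℝ) * H
  · have H := h (Pi.single 0 1) (Pi.single 1 1) (Pi.single 4 1)
    simp [Fin.sum_univ_seven, rho, tripleForm, Pi.single_apply] at H ⊢
    linear_combination (2 : ℝ) * H
  · have H := h (Pi.single 0 1) (Pi.single 1 1) (Pi.single 3 1)
    simp [Fin.sum_univ_seven, rho, tripleForm, Pi.single_apply] at H ⊢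
    linear_combination (2 : ℝ) * H

/-- Half the coordinate matrix of a 2-form. -/
def sOf (α : Alt2) : Fin 7 → Fin 7 → ℝ := fun p q => α ![Pi.single p 1, Pi.single q 1] / 2

lemma sOf_skew (α : Alt2) (p q : Fin 7) :
    sOf α p q - sOf α q p = α ![Pi.single p 1, Pi.single q 1] := by
  have h := alt_skew α (Pi.single p 1) (Pi.single q 1)
  unfold sOf
  rw [h]
  ring

lemma aOf_expand (α : Alt2) (x : Fin 7 → ℝ) :
    aOf α x = fun i => ∑ p, x p * (sOf α p i - sOf α i p) := by
  funext i
  rw [aOf_apply]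
  exact Finset.sum_congr rfl fun p _ => by rw [sOf_skew]

lemma cL_apply (α : Alt2) (k : Fin 7) :
    cL α k = ∑ i, ∑ j, rho (Pi.single k 1) (Pi.single i 1) (Pi.single j 1) *
      (sOf α i j - sOf α j i) := by
  simp only [cL, LinearMap.coe_mk, AddHom.coe_mk]
  exact Finset.sum_congr rfl fun i _ => Finset.sum_congr rfl fun j _ => by rw [sOf_skew]

/-- The annihilation condition is equivalent to lying in the kernel of the contraction. -/
lemma ann_iff_ker (α : Alt2) :
    (∀ x y z : Fin 7 → ℝ,
      rho (aOf α x) y z + rho x (aOf α y) z + rho x y (aOf α z) = 0) ↔ cL α = 0 := by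
  constructor
  · intro h
    funext k
    have hT : ∀ x y z : Fin 7 → ℝ,
        rho (fun i => ∑ p, x p * (sOf α p i - sOf α i p)) y z
          + rho x (fun i => ∑ p, y p * (sOf α p i - sOf α i p)) z
          + rho x y (fun i => ∑ p, z p * (sOf α p i - sOf α i p)) = 0 := by
      intro x y z
      have hx := aOf_expand α x
      have hy := aOf_expand α y
      have hz := aOf_expand α z
      rw [← hx, ← hy, ← hz]
      exact h x y z
    rw [cL_apply]
    simpa using core2 (sOf α) hT k
  · intro hc x y z
    have h : ∀ l : Fin 7, ∑ i, ∑ j,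
        rho (Pi.single l 1) (Pi.single i 1) (Pi.single j 1) *
          (sOf α i j - sOf α j i) = 0 := by
      intro l
      rw [← cL_apply]
      simp [hc]
    have := core (sOf α) x y z h
    rwa [← aOf_expand α x, ← aOf_expand α y, ← aOf_expand α z] at this

/-- Index type for strictly increasing pairs in `Fin 7`. -/
def PairIdx := {p : Fin 7 × Fin 7 // p.1 < p.2}

instance : Fintype PairIdx := by unfold PairIdx; infer_instance

lemma card_PairIdx : Fintype.card PairIdx = 21 := by
  show Fintype.card {p : Fin 7 × Fin 7 // p.1 < p.2} = 21
  rw [Fintype.card_subtype]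
  decide

/-- Evaluation of a 2-form on the standard basis pairs. -/
def PhiL : Alt2 →ₗ[ℝ] (PairIdx → ℝ) where
  toFun α := fun p => α ![Pi.single p.1.1 1, Pi.single p.1.2 1]
  map_add' α β := by funext p; simp
  map_smul' c α := by funext p; simp

def PsiF (c : PairIdx → ℝ) : Alt2 :=
  mkAlt (fun x y => ∑ p : PairIdx, c p * (x p.1.1 * y p.1.2 - x p.1.2 * y p.1.1))
    (fun x x' y => by
      simp only [Pi.add_apply]
      rw [← Finset.sum_add_distrib]
      exact Finset.sum_congr rfl fun p _ => by ring)
    (fun t x y => by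
      simp only [Pi.smul_apply, smul_eq_mul]
      rw [Finset.mul_sum]
      exact Finset.sum_congr rfl fun p _ => by ring)
    (fun x y y' => by
      simp only [Pi.add_apply]
      rw [← Finset.sum_add_distrib]
      exact Finset.sum_congr rfl fun p _ => by ring)
    (fun t x y => by
      simp only [Pi.smul_apply, smul_eq_mul]
      rw [Finset.mul_sum]
      exact Finset.sum_congr rfl fun p _ => by ring)
    (fun x => Finset.sum_eq_zero fun p _ => by ring)

lemma Phi_Psi (c : PairIdx → ℝ) : PhiL (PsiF c) = c := by
  funext p
  show (∑ q : PairIdx, c q * ((Pi.single p.1.1 1 : Fin 7 → ℝ) q.1.1 *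
      (Pi.single p.1.2 1 : Fin 7 → ℝ) q.1.2 - (Pi.single p.1.1 1 : Fin 7 → ℝ) q.1.2 *
      (Pi.single p.1.2 1 : Fin 7 → ℝ) q.1.1)) = c p
  rw [Finset.sum_eq_single p]
  · have hne : p.1.2 ≠ p.1.1 := ne_of_gt p.2
    simp [Pi.single_apply, hne]
  · intro q _ hqp
    by_cases h1 : q.1.1 = p.1.1
    · by_cases h2 : q.1.2 = p.1.2
      · exact absurd (Subtype.ext (Prod.ext h1 h2)) hqp
      · have h3 : q.1.2 ≠ p.1.1 := by
          intro h3
          have hq := q.2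
          rw [h3, ← h1] at hq
          exact lt_irrefl _ hq
        simp [Pi.single_apply, h2, h3]
    · by_cases h4 : q.1.1 = p.1.2
      · have h3 : q.1.2 ≠ p.1.1 := by
          intro h3
          have hq := q.2
          have hp := p.2
          rw [h4] at hq
          rw [← h3] at hp
          exact absurd (hq.trans hp) (lt_irrefl _)
        simp [Pi.single_apply, h1, h3]
      · simp [Pi.single_apply, h1, h4]
  · intro hp
    exact absurd (Finset.mem_univ p) hp

lemma Phi_inj : Function.Injective PhiL := by
  rw [← LinearMap.ker_eq_bot]
  rw [LinearMap.ker_eq_bot']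
  intro α hα
  ext m
  rw [eta2 m]
  show α ![m 0, m 1] = (0 : Alt2) ![m 0, m 1]
  rw [alt_expand]
  simp only [AlternatingMap.zero_apply]
  refine Finset.sum_eq_zero fun i _ => Finset.sum_eq_zero fun j _ => ?_
  suffices hz : α ![Pi.single i 1, Pi.single j 1] = 0 by rw [hz, mul_zero]
  rcases lt_trichotomy i j with h | h | h
  · exact congrFun hα (⟨(i, j), h⟩ : PairIdx)
  · subst h; exact alt_diag α _
  · rw [alt_skew,
      show α ![Pi.single j 1, Pi.single i 1] = 0 from congrFun hα (⟨(j, i), h⟩ : PairIdx),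
      neg_zero]

def altEquiv : Alt2 ≃ₗ[ℝ] (PairIdx → ℝ) :=
  LinearEquiv.ofBijective PhiL ⟨Phi_inj, fun c => ⟨PsiF c, Phi_Psi c⟩⟩

instance : FiniteDimensional ℝ Alt2 := Module.Finite.equiv altEquiv.symm

lemma finrank_Alt2 : Module.finrank ℝ Alt2 = 21 := by
  rw [altEquiv.finrank_eq, Module.finrank_pi, card_PairIdx]

end Stmt12


open Stmt12

/-- the 21-dimensional space of alternating 2-forms on ℝ⁷ is the internal
direct sum of `Λ²₇ = {i_v rho : v ∈ ℝ⁷}` (of dimension 7, with `v ↦ i_v rho` injective)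
and `Λ²₁₄ = {α : A_α annihilates rho}` (of dimension 14). -/
theorem stmt12 :
    ∃ S7 S14 : Submodule ℝ (AlternatingMap ℝ (Fin 7 → ℝ) ℝ (Fin 2)),
      (∀ α : AlternatingMap ℝ (Fin 7 → ℝ) ℝ (Fin 2),
        α ∈ S7 ↔ ∃ v : Fin 7 → ℝ, ∀ x y : Fin 7 → ℝ, α ![x, y] = rho v x y) ∧
      (∀ α : AlternatingMap ℝ (Fin 7 → ℝ) ℝ (Fin 2),
        α ∈ S14 ↔ ∀ x y z : Fin 7 → ℝ,
          rho (aOf α x) y z + rho x (aOf α y) z + rho x y (aOf α z) = 0) ∧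
      IsCompl S7 S14 ∧
      Module.finrank ℝ (AlternatingMap ℝ (Fin 7 → ℝ) ℝ (Fin 2)) = 21 ∧
      Module.finrank ℝ S7 = 7 ∧
      Module.finrank ℝ S14 = 14 ∧
      (∀ v w : Fin 7 → ℝ, (∀ x y : Fin 7 → ℝ, rho v x y = rho w x y) → v = w) := by
  have hinj : Function.Injective iotaL := by
    intro v w h
    have hv := c_iota v
    rw [h, c_iota w] at hv
    exact smul_right_injective (Fin 7 → ℝ) (by norm_num : (6 : ℝ) ≠ 0) hv.symm
  have hsurj : Function.Surjective cL := by
    intro w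
    refine ⟨iotaL ((6 : ℝ)⁻¹ • w), ?_⟩
    rw [c_iota, smul_smul]
    norm_num
  have hrange : Module.finrank ℝ (LinearMap.range iotaL) = 7 := by
    rw [LinearMap.finrank_range_of_inj hinj, Module.finrank_fin_fun]
  have hker : Module.finrank ℝ (LinearMap.ker cL) = 14 := by
    have hr := LinearMap.finrank_range_add_finrank_ker cL
    rw [LinearMap.range_eq_top.mpr hsurj, finrank_top, Module.finrank_fin_fun,
      finrank_Alt2] at hr
    omega
  have hdisj : Disjoint (LinearMap.range iotaL) (LinearMap.ker cL) := by
    rw [Submodule.disjoint_def]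
    intro α h7 h14
    obtain ⟨v, rfl⟩ := h7
    rw [LinearMap.mem_ker, c_iota] at h14
    have hv : v = 0 :=
      smul_right_injective (Fin 7 → ℝ) (by norm_num : (6 : ℝ) ≠ 0)
        (h14.trans (smul_zero (6 : ℝ)).symm)
    rw [hv, map_zero]
  have hcompl : IsCompl (LinearMap.range iotaL) (LinearMap.ker cL) := by
    refine ⟨hdisj, codisjoint_iff.mpr ?_⟩
    apply Submodule.eq_top_of_finrank_eq
    have hsum := Submodule.finrank_sup_add_finrank_inf_eq (LinearMap.range iotaL)
      (LinearMap.ker cL)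
    rw [disjoint_iff.mp hdisj, finrank_bot, hrange, hker] at hsum
    rw [finrank_Alt2]
    omega
  refine ⟨LinearMap.range iotaL, LinearMap.ker cL, ?_, ?_, hcompl, finrank_Alt2, hrange,
    hker, ?_⟩
  · intro α
    constructor
    · rintro ⟨v, rfl⟩
      exact ⟨v, fun x y => rfl⟩
    · rintro ⟨v, hv⟩
      refine ⟨v, ?_⟩
      ext m
      rw [eta2 m]
      exact (hv (m 0) (m 1)).symm
  · intro α
    rw [LinearMap.mem_ker]
    exact (ann_iff_ker α).symm
  · intro v w h
    apply hinj
    ext m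
    rw [eta2 m]
    exact h (m 0) (m 1)
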